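/- Let k be a field of characteristic zero and let A = k[x₁, x₂, x₃, …, y] be the polynomial algebra in countably many variables x_i (i ≥ 1) and an additional variable y, equipped with a bracket {-,-} : A × A → A that is k-bilinear, antisymmetric, satisfies the Jacobi identity, is a derivation in each argument, and satisfies {x_i, x_j} = 0 and {y, x_i} = x_{i+1} for all i, j ≥ 1 (this is the symmetric algebra of the Lie algebra D with basis x₁, x₂, …, y and these brackets). Then the chain of Poisson ideals [x₁²] ⊆ [x₁², x₂²] ⊆ [x₁², x₂², x₃²] ⊆ ⋯, where [S] denotes the smallest Poisson ideal of A containing S, is strictly increasing; in particular A does not satisfy the ACC on Poisson ideals. -/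

import Mathlib

/-- `B` is a Poisson bracket on the commutative `k`-algebra `A`: it is `k`-bilinear
(additivity and `k`-homogeneity in the first argument, together with antisymmetry, give
bilinearity), antisymmetric, satisfies the Jacobi identity, and is a derivation in each
argument. -/
def IsPoissonBracket (k : Type*) {A : Type*} [CommRing k] [CommRing A] [Algebra k A]
    (B : A → A → A) : Prop :=
  (∀ a b c : A, B (a + b) c = B a c + B b c) ∧
  (∀ (r : k) (a b : A), B (r • a) b = r • B a b) ∧
  (∀ a b : A, B a b = - B b a) ∧
  (∀ a b c : A, B a (B b c) + B b (B c a) + B c (B a b) = 0) ∧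
  (∀ a b c : A, B a (b * c) = B a b * c + b * B a c)

/-- An ideal `I` is a Poisson ideal for the bracket `B` if `{A, I} ⊆ I`. -/
def IsPoissonIdeal {A : Type*} [CommRing A] (B : A → A → A) (I : Ideal A) : Prop :=
  ∀ x : A, ∀ y ∈ I, B x y ∈ I

/-- `A` satisfies the ascending chain condition on radical Poisson ideals. -/
def PoissonRadicalACC {A : Type*} [CommRing A] (B : A → A → A) : Prop :=
  ∀ c : ℕ → Ideal A, (∀ n, IsPoissonIdeal B (c n)) → (∀ n, (c n).IsRadical) →
    Monotone c → ∃ N, ∀ n, N ≤ n → c n = c N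

/-- `A` satisfies the ascending chain condition on (arbitrary) Poisson ideals. -/
def PoissonACC {A : Type*} [CommRing A] (B : A → A → A) : Prop :=
  ∀ c : ℕ → Ideal A, (∀ n, IsPoissonIdeal B (c n)) → Monotone c →
    ∃ N, ∀ n, N ≤ n → c n = c N

/-- The smallest Poisson ideal containing a subset `S` of `A`. -/
def poissonGen {A : Type*} [CommRing A] (B : A → A → A) (S : Set A) : Ideal A :=
  sInf {I : Ideal A | IsPoissonIdeal B I ∧ S ⊆ (I : Set A)}

set_option linter.unusedSectionVars false

section PoisE
variable (k : Type*) [Field k]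

@[ext]
structure PoisE (m : ℕ) (γ : Fin m → k) where
  c : k
  a : Fin m → k
  b : Fin m → k
  w : k

namespace PoisE
variable {k} {m : ℕ} {γ : Fin m → k}

/-- the symmetric pairing used in the `w`-component of products -/
def S (x y : PoisE k m γ) : k := ∑ r, γ r * (x.a r * y.b r + y.a r * x.b r)

lemma S_def (x y : PoisE k m γ) :
    S x y = ∑ r, γ r * (x.a r * y.b r + y.a r * x.b r) := rfl

instance : Zero (PoisE k m γ) := ⟨⟨0, 0, 0, 0⟩⟩
instance : One (PoisE k m γ) := ⟨⟨1, 0, 0, 0⟩⟩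
instance : Add (PoisE k m γ) :=
  ⟨fun x y => ⟨x.c + y.c, fun r => x.a r + y.a r, fun r => x.b r + y.b r, x.w + y.w⟩⟩
instance : Neg (PoisE k m γ) :=
  ⟨fun x => ⟨-x.c, fun r => -x.a r, fun r => -x.b r, -x.w⟩⟩
instance : Mul (PoisE k m γ) :=
  ⟨fun x y => ⟨x.c * y.c, fun r => x.c * y.a r + y.c * x.a r,
    fun r => x.c * y.b r + y.c * x.b r, x.c * y.w + y.c * x.w + S x y⟩⟩

@[simp] lemma zero_c : (0 : PoisE k m γ).c = 0 := rfl
@[simp] lemma zero_a (r) : (0 : PoisE k m γ).a r = 0 := rfl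
@[simp] lemma zero_b (r) : (0 : PoisE k m γ).b r = 0 := rfl
@[simp] lemma zero_w : (0 : PoisE k m γ).w = 0 := rfl
@[simp] lemma one_c : (1 : PoisE k m γ).c = 1 := rfl
@[simp] lemma one_a (r) : (1 : PoisE k m γ).a r = 0 := rfl
@[simp] lemma one_b (r) : (1 : PoisE k m γ).b r = 0 := rfl
@[simp] lemma one_w : (1 : PoisE k m γ).w = 0 := rfl
@[simp] lemma add_c (x y : PoisE k m γ) : (x + y).c = x.c + y.c := rfl
@[simp] lemma add_a (x y : PoisE k m γ) (r) : (x + y).a r = x.a r + y.a r := rfl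
@[simp] lemma add_b (x y : PoisE k m γ) (r) : (x + y).b r = x.b r + y.b r := rfl
@[simp] lemma add_w (x y : PoisE k m γ) : (x + y).w = x.w + y.w := rfl
@[simp] lemma neg_c (x : PoisE k m γ) : (-x).c = -x.c := rfl
@[simp] lemma neg_a (x : PoisE k m γ) (r) : (-x).a r = -x.a r := rfl
@[simp] lemma neg_b (x : PoisE k m γ) (r) : (-x).b r = -x.b r := rfl
@[simp] lemma neg_w (x : PoisE k m γ) : (-x).w = -x.w := rfl
@[simp] lemma mul_c (x y : PoisE k m γ) : (x * y).c = x.c * y.c := rfl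
@[simp] lemma mul_a (x y : PoisE k m γ) (r) : (x * y).a r = x.c * y.a r + y.c * x.a r := rfl
@[simp] lemma mul_b (x y : PoisE k m γ) (r) : (x * y).b r = x.c * y.b r + y.c * x.b r := rfl
lemma mul_w (x y : PoisE k m γ) : (x * y).w = x.c * y.w + y.c * x.w + S x y := rfl

lemma ext' {x y : PoisE k m γ} (hc : x.c = y.c) (ha : ∀ r, x.a r = y.a r)
    (hb : ∀ r, x.b r = y.b r) (hw : x.w = y.w) : x = y :=
  PoisE.ext hc (funext ha) (funext hb) hw

lemma S_comm (x y : PoisE k m γ) : S x y = S y x := by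
  refine Finset.sum_congr rfl fun r _ => by ring

lemma S_add_left (x y z : PoisE k m γ) : S (x + y) z = S x z + S y z := by
  rw [S_def, S_def, S_def, ← Finset.sum_add_distrib]
  exact Finset.sum_congr rfl fun r _ => by simp; ring

lemma S_mul_left (x y z : PoisE k m γ) : S (x * y) z = x.c * S y z + y.c * S x z := by
  rw [S_def, S_def, S_def, Finset.mul_sum, Finset.mul_sum, ← Finset.sum_add_distrib]
  exact Finset.sum_congr rfl fun r _ => by simp; ring

lemma S_zero_left (x : PoisE k m γ) : S 0 x = 0 := by
  rw [S_def]; exact Finset.sum_eq_zero fun r _ => by simp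

lemma S_one_left (x : PoisE k m γ) : S 1 x = 0 := by
  rw [S_def]; exact Finset.sum_eq_zero fun r _ => by simp

protected lemma add_assoc' (x y z : PoisE k m γ) : x + y + z = x + (y + z) := by
  refine ext' ?_ (fun r => ?_) (fun r => ?_) ?_ <;> simp <;> ring

protected lemma zero_add' (x : PoisE k m γ) : 0 + x = x := by
  refine ext' ?_ (fun r => ?_) (fun r => ?_) ?_ <;> simp

protected lemma add_zero' (x : PoisE k m γ) : x + 0 = x := by
  refine ext' ?_ (fun r => ?_) (fun r => ?_) ?_ <;> simp

protected lemma add_comm' (x y : PoisE k m γ) : x + y = y + x := by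
  refine ext' ?_ (fun r => ?_) (fun r => ?_) ?_ <;> simp <;> ring

protected lemma neg_add_cancel' (x : PoisE k m γ) : -x + x = 0 := by
  refine ext' ?_ (fun r => ?_) (fun r => ?_) ?_ <;> simp

protected lemma mul_comm' (x y : PoisE k m γ) : x * y = y * x := by
  refine ext' ?_ (fun r => ?_) (fun r => ?_) ?_ <;>
    simp [mul_w, S_comm x y] <;> ring

protected lemma mul_assoc' (x y z : PoisE k m γ) : x * y * z = x * (y * z) := by
  refine ext' ?_ (fun r => ?_) (fun r => ?_) ?_
  · simp; ring
  · simp; ring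
  · simp; ring
  · simp only [mul_w, mul_c, S_mul_left, S_comm x (y * z), S_mul_left,
      S_comm z x, S_comm y x]
    ring

protected lemma one_mul' (x : PoisE k m γ) : 1 * x = x := by
  refine ext' ?_ (fun r => ?_) (fun r => ?_) ?_ <;> simp [mul_w, S_one_left]

protected lemma mul_one' (x : PoisE k m γ) : x * 1 = x := by
  refine ext' ?_ (fun r => ?_) (fun r => ?_) ?_ <;>
    simp [mul_w, S_comm x 1, S_one_left]

protected lemma zero_mul' (x : PoisE k m γ) : 0 * x = 0 := by
  refine ext' ?_ (fun r => ?_) (fun r => ?_) ?_ <;> simp [mul_w, S_zero_left]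

protected lemma mul_zero' (x : PoisE k m γ) : x * 0 = 0 := by
  refine ext' ?_ (fun r => ?_) (fun r => ?_) ?_ <;>
    simp [mul_w, S_comm x 0, S_zero_left]

protected lemma left_distrib' (x y z : PoisE k m γ) : x * (y + z) = x * y + x * z := by
  refine ext' ?_ (fun r => ?_) (fun r => ?_) ?_
  · simp; ring
  · simp; ring
  · simp; ring
  · simp only [mul_w, add_w, add_c, S_comm x (y + z), S_add_left,
      S_comm y x, S_comm z x]
    ring

protected lemma right_distrib' (x y z : PoisE k m γ) : (x + y) * z = x * z + y * z := by
  refine ext' ?_ (fun r => ?_) (fun r => ?_) ?_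
  · simp; ring
  · simp; ring
  · simp; ring
  · simp only [mul_w, add_w, add_c, S_add_left]
    ring

instance : AddCommGroup (PoisE k m γ) where
  add := (· + ·)
  zero := 0
  neg := (- ·)
  nsmul := nsmulRec
  zsmul := zsmulRec
  add_assoc := PoisE.add_assoc'
  zero_add := PoisE.zero_add'
  add_zero := PoisE.add_zero'
  add_comm := PoisE.add_comm'
  neg_add_cancel := PoisE.neg_add_cancel'

instance : CommRing (PoisE k m γ) where
  __ := (inferInstance : AddCommGroup (PoisE k m γ))
  mul := (· * ·)
  one := 1
  mul_comm := PoisE.mul_comm'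
  mul_assoc := PoisE.mul_assoc'
  one_mul := PoisE.one_mul'
  mul_one := PoisE.mul_one'
  zero_mul := PoisE.zero_mul'
  mul_zero := PoisE.mul_zero'
  left_distrib := PoisE.left_distrib'
  right_distrib := PoisE.right_distrib'

variable (k m γ) in
/-- the structure map `k → PoisE`. -/
def toE : k →+* PoisE k m γ where
  toFun r := ⟨r, 0, 0, 0⟩
  map_one' := rfl
  map_mul' x y := by
    refine ext' ?_ (fun r => ?_) (fun r => ?_) ?_ <;> simp [mul_w, S_def]
  map_zero' := rfl
  map_add' x y := by
    refine ext' ?_ (fun r => ?_) (fun r => ?_) ?_ <;> simp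

@[simp] lemma toE_c (r : k) : (toE k m γ r).c = r := rfl
@[simp] lemma toE_a (r : k) (s) : (toE k m γ r).a s = 0 := rfl
@[simp] lemma toE_b (r : k) (s) : (toE k m γ r).b s = 0 := rfl
@[simp] lemma toE_w (r : k) : (toE k m γ r).w = 0 := rfl

/-- the derivation on `PoisE`. -/
def dE (x : PoisE k m γ) : PoisE k m γ :=
  ⟨0, fun r => ((r : ℕ) + 1 : k) * x.a r, fun r => -(((r : ℕ) + 1 : k)) * x.b r, 0⟩

lemma dE_add (x y : PoisE k m γ) : dE (x + y) = dE x + dE y := by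
  refine ext' ?_ (fun r => ?_) (fun r => ?_) ?_ <;> simp [dE] <;> ring

lemma dE_mul (x y : PoisE k m γ) : dE (x * y) = dE x * y + x * dE y := by
  refine ext' ?_ (fun r => ?_) (fun r => ?_) ?_
  · simp [dE]
  · simp [dE]; ring
  · simp [dE]; ring
  · simp only [dE, mul_w, mul_c, add_w, S_def, mul_zero, zero_mul, add_zero, zero_add]
    rw [← Finset.sum_add_distrib]
    exact (Finset.sum_eq_zero fun r _ => by ring).symm

lemma dE_one : dE (1 : PoisE k m γ) = 0 := by
  refine ext' ?_ (fun r => ?_) (fun r => ?_) ?_ <;> simp [dE]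

lemma dE_toE (r : k) : dE (toE k m γ r) = 0 := by
  refine ext' ?_ (fun s => ?_) (fun s => ?_) ?_ <;> simp [dE]

variable (k m γ) in
/-- the images of the variables `xᵢ`. -/
def xi (i : ℕ) : PoisE k m γ :=
  ⟨0, fun r => ((r : ℕ) + 1 : k) ^ i, fun r => (-(((r : ℕ) + 1 : k))) ^ i, 0⟩

lemma dE_xi (i : ℕ) : dE (xi k m γ i) = xi k m γ (i + 1) := by
  refine ext' ?_ (fun r => ?_) (fun r => ?_) ?_ <;>
    simp [dE, xi, pow_succ] <;> ring

variable (k m γ) in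
/-- a pure-`w` element. -/
def wElt (t : k) : PoisE k m γ := ⟨0, 0, 0, t⟩

@[simp] lemma wElt_zero : wElt k m γ 0 = 0 := rfl

lemma xi_mul_xi (i : ℕ) :
    xi k m γ i * xi k m γ i
      = wElt k m γ ((-1) ^ i *
          (2 * ∑ r, γ r * (((r : ℕ) + 1 : k) ^ i * ((r : ℕ) + 1 : k) ^ i))) := by
  refine ext' ?_ (fun r => ?_) (fun r => ?_) ?_
  · simp [xi, wElt]
  · simp [xi, wElt]
  · simp [xi, wElt]
  · simp only [xi, wElt, mul_w, S_def, mul_zero, zero_mul, add_zero, zero_add]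
    rw [Finset.mul_sum, Finset.mul_sum]
    refine Finset.sum_congr rfl fun r _ => ?_
    rw [neg_pow]
    ring

end PoisE
end PoisE
open MvPolynomial

section Gamma
variable {k : Type*} [Field k] [CharZero k]

lemma gamma_exists (n : ℕ) :
    ∃ γ : Fin (n + 1) → k, ∀ i : Fin (n + 1),
      (∑ r, γ r * (((r : ℕ) + 1 : k) ^ 2) ^ ((i : ℕ) + 1))
        = if (i : ℕ) = n then 1 else 0 := by
  classical
  set vnd : Fin (n + 1) → k := fun r => ((r : ℕ) + 1 : k) ^ 2 with hvnd
  have hne : ∀ r : Fin (n + 1), vnd r ≠ 0 := by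
    intro r
    have h0 : (((r : ℕ) + 1 : ℕ) : k) ≠ 0 := Nat.cast_ne_zero.mpr (by omega)
    simp only [hvnd]
    push_cast at h0 ⊢
    exact pow_ne_zero _ h0
  have hinj : Function.Injective vnd := by
    intro r s h
    have h' : ((((r : ℕ) + 1) ^ 2 : ℕ) : k) = ((((s : ℕ) + 1) ^ 2 : ℕ) : k) := by
      push_cast; simpa [hvnd] using h
    have h2 := Nat.cast_injective h'
    have hrs : (r : ℕ) + 1 = (s : ℕ) + 1 := Nat.pow_left_injective (by norm_num) h2
    exact Fin.ext (by omega)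
  set M : Matrix (Fin (n + 1)) (Fin (n + 1)) k :=
    Matrix.of fun i r => vnd r ^ ((i : ℕ) + 1) with hM
  have hdet : M.det ≠ 0 := by
    have h1 : M = (Matrix.of fun r i => vnd r * Matrix.vandermonde vnd r i).transpose := by
      ext i r
      simp [hM, Matrix.vandermonde, pow_succ, mul_comm]
    rw [h1, Matrix.det_transpose, Matrix.det_mul_column]
    refine mul_ne_zero (Finset.prod_ne_zero_iff.mpr fun r _ => hne r) ?_
    rw [Matrix.det_vandermonde]
    refine Finset.prod_ne_zero_iff.mpr fun i _ => ?_
    refine Finset.prod_ne_zero_iff.mpr fun j hj => ?_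
    have hij : i ≠ j := (Finset.mem_Ioi.mp hj).ne
    exact sub_ne_zero.mpr fun h => hij.symm (hinj h)
  set e : Fin (n + 1) → k := fun i => if (i : ℕ) = n then 1 else 0 with he
  refine ⟨(M⁻¹).mulVec e, fun i => ?_⟩
  have h2 : M.mulVec ((M⁻¹).mulVec e) = e := by
    rw [Matrix.mulVec_mulVec, Matrix.mul_nonsing_inv M (isUnit_iff_ne_zero.mpr hdet),
      Matrix.one_mulVec]
  have h3 := congrFun h2 i
  rw [Matrix.mulVec, dotProduct] at h3
  have h4 : e i = if (i : ℕ) = n then 1 else 0 := rfl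
  rw [← h4, ← h3]
  exact Finset.sum_congr rfl fun r _ => by rw [mul_comm]; rfl
end Gamma
section BracketFacts
open MvPolynomial
variable {k : Type*} [Field k] [CharZero k]
  {B : MvPolynomial ℕ k → MvPolynomial ℕ k → MvPolynomial ℕ k}
  (hB : IsPoissonBracket k B)

include hB

lemma B_one_right (a : MvPolynomial ℕ k) : B a 1 = 0 := by
  have h := hB.2.2.2.2 a 1 1
  rw [mul_one, mul_one, one_mul] at h
  exact (left_eq_add.mp h)

lemma B_C_right (a : MvPolynomial ℕ k) (r : k) : B a (C r) = 0 := by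
  have h1 : (C r : MvPolynomial ℕ k) = r • 1 := by
    rw [MvPolynomial.smul_eq_C_mul, mul_one]
  rw [h1, hB.2.2.1, hB.2.1, hB.2.2.1 1 a, B_one_right hB, neg_zero, smul_zero, neg_zero]

lemma B_C_left (r : k) (a : MvPolynomial ℕ k) : B (C r) a = 0 := by
  rw [hB.2.2.1, B_C_right hB, neg_zero]

lemma B_add_right (a b c : MvPolynomial ℕ k) : B a (b + c) = B a b + B a c := by
  rw [hB.2.2.1, hB.1, neg_add, ← hB.2.2.1, ← hB.2.2.1]

lemma B_self (a : MvPolynomial ℕ k) : B a a = 0 := by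
  have h := hB.2.2.1 a a
  have h2 : (2 : k) • B a a = 0 := by
    rw [two_smul]; nth_rewrite 1 [h]; exact neg_add_cancel _
  rcases smul_eq_zero.mp h2 with h3 | h3
  · exact absurd h3 two_ne_zero
  · exact h3

lemma B_mul_left (a b f : MvPolynomial ℕ k) : B (a * b) f = a * B b f + b * B a f := by
  rw [hB.2.2.1, hB.2.2.2.2, hB.2.2.1 f a, hB.2.2.1 f b]
  ring

end BracketFacts

namespace PoisE
variable {k : Type*} [Field k] {m : ℕ} {γ : Fin m → k}

lemma dE_zero : dE (0 : PoisE k m γ) = 0 := by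
  refine ext' ?_ (fun r => ?_) (fun r => ?_) ?_ <;> simp [dE]

/-- coefficientwise extension of `dE` to polynomials. -/
noncomputable def dP (p : Polynomial (PoisE k m γ)) : Polynomial (PoisE k m γ) :=
  p.sum fun n c => Polynomial.C (dE c) * Polynomial.X ^ n

lemma dP_monomial (n : ℕ) (e : PoisE k m γ) :
    dP (Polynomial.monomial n e) = Polynomial.C (dE e) * Polynomial.X ^ n := by
  unfold dP
  rw [Polynomial.sum_monomial_index]
  rw [dE_zero, map_zero, zero_mul]

lemma dP_zero : dP (0 : Polynomial (PoisE k m γ)) = 0 :=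
  Polynomial.sum_zero_index _

lemma dP_add (p q : Polynomial (PoisE k m γ)) : dP (p + q) = dP p + dP q := by
  unfold dP
  rw [Polynomial.sum_add_index]
  · intro i; rw [dE_zero, map_zero, zero_mul]
  · intro i e₁ e₂; rw [dE_add, map_add, add_mul]

lemma dP_C (e : PoisE k m γ) : dP (Polynomial.C e) = Polynomial.C (dE e) := by
  rw [← Polynomial.monomial_zero_left, dP_monomial, pow_zero, mul_one]

lemma dP_X : dP (Polynomial.X : Polynomial (PoisE k m γ)) = 0 := by
  rw [← Polynomial.monomial_one_one_eq_X, dP_monomial, dE_one, map_zero, zero_mul]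

lemma dP_mul (p q : Polynomial (PoisE k m γ)) : dP (p * q) = dP p * q + p * dP q := by
  induction p using Polynomial.induction_on' with
  | add f g hf hg =>
    rw [add_mul, dP_add, hf, hg, dP_add]; ring
  | monomial np ap =>
    induction q using Polynomial.induction_on' with
    | add f g hf hg =>
      rw [mul_add, dP_add, hf, hg, dP_add]; ring
    | monomial nq aq =>
      rw [Polynomial.monomial_mul_monomial, dP_monomial, dP_monomial, dP_monomial,
        dE_mul, map_add, add_mul, ← Polynomial.C_mul_X_pow_eq_monomial,
        ← Polynomial.C_mul_X_pow_eq_monomial, map_mul, map_mul, pow_add]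
      ring

open MvPolynomial in
variable (k m γ) in
/-- the evaluation homomorphism `k[x₁,…,y] → (PoisE)[y]`. -/
noncomputable def phiE : MvPolynomial ℕ k →+* Polynomial (PoisE k m γ) :=
  MvPolynomial.eval₂Hom ((Polynomial.C : PoisE k m γ →+* _).comp (toE k m γ))
    (fun i => if i = 0 then Polynomial.X else Polynomial.C (xi k m γ i))

@[simp] lemma phiE_C (r : k) :
    phiE k m γ (MvPolynomial.C r) = Polynomial.C (toE k m γ r) := by
  simp [phiE]

@[simp] lemma phiE_X0 : phiE k m γ (MvPolynomial.X 0) = Polynomial.X := by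
  simp [phiE]

@[simp] lemma phiE_Xs (i : ℕ) :
    phiE k m γ (MvPolynomial.X (i + 1)) = Polynomial.C (xi k m γ (i + 1)) := by
  simp [phiE]

end PoisE

section Main
open MvPolynomial PoisE
variable {k : Type*} [Field k] [CharZero k]
  {B : MvPolynomial ℕ k → MvPolynomial ℕ k → MvPolynomial ℕ k}
  {m : ℕ} {γ : Fin m → k}

lemma phi_bracket (hB : IsPoissonBracket k B) (i₀ : ℕ)
    (D : Polynomial (PoisE k m γ) → Polynomial (PoisE k m γ))
    (hDC : ∀ r : k, D (Polynomial.C (toE k m γ r)) = 0)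
    (hDadd : ∀ p q, D (p + q) = D p + D q)
    (hDmul : ∀ p q, D (p * q) = D p * q + p * D q)
    (hDgen : ∀ i, phiE k m γ (B (X i₀) (X i)) = D (phiE k m γ (X i))) :
    ∀ f, phiE k m γ (B (X i₀) f) = D (phiE k m γ f) := by
  intro f
  induction f using MvPolynomial.induction_on with
  | C r => rw [B_C_right hB, map_zero, phiE_C, hDC]
  | add p q hp hq => rw [B_add_right hB, map_add, hp, hq, map_add, hDadd]
  | mul_X p i hp =>
    rw [hB.2.2.2.2 (X i₀) p (X i)]
    simp only [map_add, map_mul]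
    rw [hp, hDgen i, hDmul]

lemma ker_stable (hB : IsPoissonBracket k B)
    (hxx : ∀ i j : ℕ, 1 ≤ i → 1 ≤ j → B (X i) (X j) = 0)
    (hyx : ∀ i : ℕ, 1 ≤ i → B (X 0) (X i) = X (i + 1))
    (f : MvPolynomial ℕ k) (hf : phiE k m γ f = 0) (i : ℕ) :
    phiE k m γ (B (X i) f) = 0 := by
  cases i with
  | zero =>
    rw [phi_bracket hB 0 dP (fun r => by rw [dP_C, dE_toE, map_zero])
      dP_add dP_mul ?_ f, hf, dP_zero]
    intro i
    cases i with
    | zero => rw [B_self hB, map_zero, phiE_X0, dP_X]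
    | succ j =>
      rw [hyx (j + 1) (by omega), phiE_Xs, phiE_Xs, dP_C, dE_xi]
  | succ j =>
    rw [phi_bracket hB (j + 1)
      (fun p => -(Polynomial.C (xi k m γ (j + 2)) * Polynomial.derivative p))
      (fun r => by
        show -(Polynomial.C (xi k m γ (j + 2))
          * Polynomial.derivative (Polynomial.C (toE k m γ r))) = 0
        rw [Polynomial.derivative_C, mul_zero, neg_zero])
      (fun p q => by
        show -(Polynomial.C (xi k m γ (j + 2)) * Polynomial.derivative (p + q))
          = -(Polynomial.C (xi k m γ (j + 2)) * Polynomial.derivative p)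
            + -(Polynomial.C (xi k m γ (j + 2)) * Polynomial.derivative q)
        rw [Polynomial.derivative_add]; ring)
      (fun p q => by
        show -(Polynomial.C (xi k m γ (j + 2)) * Polynomial.derivative (p * q))
          = -(Polynomial.C (xi k m γ (j + 2)) * Polynomial.derivative p) * q
            + p * -(Polynomial.C (xi k m γ (j + 2)) * Polynomial.derivative q)
        rw [Polynomial.derivative_mul]; ring)
      ?_ f, hf, Polynomial.derivative_zero, mul_zero, neg_zero]
    intro i
    cases i with
    | zero =>
      show _ = -(Polynomial.C (xi k m γ (j + 2))
        * Polynomial.derivative (phiE k m γ (X 0)))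
      rw [hB.2.2.1 (X (j + 1)) (X 0), hyx (j + 1) (by omega), map_neg, phiE_Xs,
        phiE_X0, Polynomial.derivative_X, mul_one]
    | succ l =>
      show _ = -(Polynomial.C (xi k m γ (j + 2))
        * Polynomial.derivative (phiE k m γ (X (l + 1))))
      rw [hxx (j + 1) (l + 1) (by omega) (by omega), map_zero, phiE_Xs,
        Polynomial.derivative_C, mul_zero, neg_zero]

lemma ker_poisson (hB : IsPoissonBracket k B)
    (hxx : ∀ i j : ℕ, 1 ≤ i → 1 ≤ j → B (X i) (X j) = 0)
    (hyx : ∀ i : ℕ, 1 ≤ i → B (X 0) (X i) = X (i + 1)) :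
    IsPoissonIdeal B (RingHom.ker (phiE k m γ)) := by
  intro p f hf
  induction p using MvPolynomial.induction_on with
  | C r =>
    rw [RingHom.mem_ker, B_C_left hB, map_zero]
  | add p q hp hq =>
    rw [hB.1]; exact add_mem hp hq
  | mul_X p i hp =>
    rw [B_mul_left hB]
    refine add_mem (Ideal.mul_mem_left _ p ?_) (Ideal.mul_mem_left _ (X i) hp)
    rw [RingHom.mem_ker]
    exact ker_stable hB hxx hyx f (RingHom.mem_ker.mp hf) i

lemma phiE_sq (i : ℕ) (hi : 1 ≤ i) :
    phiE k m γ (X i ^ 2)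
      = Polynomial.C (wElt k m γ ((-1) ^ i *
          (2 * ∑ r, γ r * (((r : ℕ) + 1 : k) ^ i * ((r : ℕ) + 1 : k) ^ i)))) := by
  obtain ⟨j, rfl⟩ : ∃ j, i = j + 1 := ⟨i - 1, by omega⟩
  rw [map_pow, phiE_Xs, ← map_pow, sq, xi_mul_xi]

end Main

section GenFacts
variable {A : Type*} [CommRing A] (B : A → A → A)

lemma poissonGen_poisson (S : Set A) : IsPoissonIdeal B (poissonGen B S) := by
  intro x y hy
  rw [poissonGen, Submodule.mem_sInf] at hy ⊢
  exact fun I hI => hI.1 x y (hy I hI)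

lemma poissonGen_mono {S T : Set A} (h : S ⊆ T) : poissonGen B S ≤ poissonGen B T :=
  sInf_le_sInf fun I hI => ⟨hI.1, h.trans hI.2⟩

lemma subset_poissonGen (S : Set A) : S ⊆ poissonGen B S := by
  intro x hx
  rw [SetLike.mem_coe, poissonGen, Submodule.mem_sInf]
  exact fun I hI => hI.2 hx

lemma poissonGen_le {S : Set A} {I : Ideal A} (hI : IsPoissonIdeal B I)
    (hS : S ⊆ I) : poissonGen B S ≤ I :=
  sInf_le ⟨hI, hS⟩
end GenFacts

open MvPolynomial

/-- Let `k` be a field of characteristic zero and let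
`A = k[x₁, x₂, …, y]` be the polynomial algebra in the variables `xᵢ = X i` (`i ≥ 1`) and
`y = X 0` (the symmetric algebra of the Lie algebra `D`), endowed with its Poisson bracket
determined by `{xᵢ, xⱼ} = 0` and `{y, xᵢ} = x_{i+1}`.  Then the chain of Poisson ideals
`[x₁²] ⊆ [x₁², x₂²] ⊆ ⋯` is strictly increasing; in particular `A` does not have the ACC on
Poisson ideals. -/
theorem symmetricAlgebraD_not_poissonACC
    {k : Type*} [Field k] [CharZero k]
    (B : MvPolynomial ℕ k → MvPolynomial ℕ k → MvPolynomial ℕ k)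
    (hB : IsPoissonBracket k B)
    (hxx : ∀ i j : ℕ, 1 ≤ i → 1 ≤ j → B (X i) (X j) = 0)
    (hyx : ∀ i : ℕ, 1 ≤ i → B (X 0) (X i) = X (i + 1)) :
    (∀ n : ℕ, 1 ≤ n →
      poissonGen B ((fun i : ℕ => (X i : MvPolynomial ℕ k) ^ 2) '' {i : ℕ | 1 ≤ i ∧ i ≤ n}) <
      poissonGen B ((fun i : ℕ => (X i : MvPolynomial ℕ k) ^ 2) ''
        {i : ℕ | 1 ≤ i ∧ i ≤ n + 1})) ∧
    ¬ PoissonACC B := by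
  have key : ∀ n : ℕ,
      poissonGen B ((fun i : ℕ => (X i : MvPolynomial ℕ k) ^ 2) '' {i : ℕ | 1 ≤ i ∧ i ≤ n}) <
      poissonGen B ((fun i : ℕ => (X i : MvPolynomial ℕ k) ^ 2) ''
        {i : ℕ | 1 ≤ i ∧ i ≤ n + 1}) := by
    intro n
    have hle : poissonGen B ((fun i : ℕ => (X i : MvPolynomial ℕ k) ^ 2) ''
          {i : ℕ | 1 ≤ i ∧ i ≤ n}) ≤
        poissonGen B ((fun i : ℕ => (X i : MvPolynomial ℕ k) ^ 2) ''
          {i : ℕ | 1 ≤ i ∧ i ≤ n + 1}) :=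
      poissonGen_mono B (Set.image_mono fun i hi => ⟨hi.1, hi.2.trans (by omega)⟩)
    refine lt_of_le_of_ne hle fun heq => ?_
    obtain ⟨γ, hγ⟩ := gamma_exists (k := k) n
    -- the sums appearing in `phiE_sq`
    have hT : ∀ i : ℕ, 1 ≤ i → i ≤ n + 1 →
        (∑ r : Fin (n + 1), γ r * (((r : ℕ) + 1 : k) ^ i * ((r : ℕ) + 1 : k) ^ i))
          = if i = n + 1 then 1 else 0 := by
      intro i h1 h2
      have h3 := hγ ⟨i - 1, by omega⟩
      simp only [Fin.val_mk] at h3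
      rw [show i - 1 + 1 = i from by omega] at h3
      have h4 : ∀ r : Fin (n + 1),
          γ r * (((r : ℕ) + 1 : k) ^ 2) ^ i
            = γ r * (((r : ℕ) + 1 : k) ^ i * ((r : ℕ) + 1 : k) ^ i) := by
        intro r
        congr 1
        rw [← pow_add, ← two_mul, pow_mul]
      rw [Finset.sum_congr rfl fun r _ => h4 r] at h3
      rw [h3]
      by_cases h5 : i = n + 1
      · rw [if_pos h5, if_pos (by omega)]
      · rw [if_neg (by omega), if_neg h5]
    -- the kernel of phiE is a Poisson ideal containing the small generators
    have hker : poissonGen B ((fun i : ℕ => (X i : MvPolynomial ℕ k) ^ 2) ''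
          {i : ℕ | 1 ≤ i ∧ i ≤ n}) ≤ RingHom.ker (PoisE.phiE k (n + 1) γ) := by
      refine poissonGen_le B (ker_poisson hB hxx hyx) ?_
      rintro _ ⟨i, ⟨h1, h2⟩, rfl⟩
      rw [SetLike.mem_coe, RingHom.mem_ker, phiE_sq i h1, hT i h1 (by omega),
        if_neg (by omega), mul_zero, mul_zero, PoisE.wElt_zero, map_zero]
    have hmem : (X (n + 1) : MvPolynomial ℕ k) ^ 2 ∈
        poissonGen B ((fun i : ℕ => (X i : MvPolynomial ℕ k) ^ 2) ''
          {i : ℕ | 1 ≤ i ∧ i ≤ n + 1}) :=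
      subset_poissonGen B _ ⟨n + 1, ⟨by omega, le_rfl⟩, rfl⟩
    rw [← heq] at hmem
    have hval := hker hmem
    rw [RingHom.mem_ker, phiE_sq (n + 1) (by omega), hT (n + 1) (by omega) le_rfl,
      if_pos rfl, mul_one] at hval
    have hw : ((-1 : k) ^ (n + 1) * 2) = 0 := by
      have := Polynomial.C_eq_zero.mp hval
      exact congrArg PoisE.w this
    exact absurd hw (mul_ne_zero (pow_ne_zero _ (by norm_num)) two_ne_zero)
  refine ⟨fun n _ => key n, fun hacc => ?_⟩
  set c : ℕ → Ideal (MvPolynomial ℕ k) := fun m =>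
    poissonGen B ((fun i : ℕ => (X i : MvPolynomial ℕ k) ^ 2) ''
      {i : ℕ | 1 ≤ i ∧ i ≤ m + 1}) with hc
  have hPois : ∀ m, IsPoissonIdeal B (c m) := fun m => poissonGen_poisson B _
  have hmono : Monotone c :=
    monotone_nat_of_le_succ fun m =>
      poissonGen_mono B (Set.image_mono fun i hi => ⟨hi.1, hi.2.trans (by omega)⟩)
  obtain ⟨N, hN⟩ := hacc c hPois hmono
  have h1 : c (N + 1) = c N := hN (N + 1) (by omega)
  exact (key (N + 1)).ne h1.symm
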